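/- Suppose in a one-dimensional constant-length fusion with J tile species, coincidence with waiting k, and all n-supertiles consisting of at most C·J subtiles of level n−1, any two k-supertiles agree on at least one tile. Then any two nk-supertiles agree on at least a fraction 1 − ((C^k J^k − 1)/(C^k J^k))^n of their tiles, and this fraction tends to 1 as n → ∞. -/

import Mathlib

open Finset Filter

theorem stmt_6 (J C k : ℕ) (hJ : 1 ≤ J) (hC : 1 ≤ C) (hk : 1 ≤ k)
    (A : ℕ → Type) [DecidableEq (A 0)]
    (relLen : ℕ → ℕ → ℕ)
    (blocks : ∀ m n : ℕ, A n → Fin (relLen m n) → A m)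
    (hpos : ∀ m n, m ≤ n → 0 < relLen m n)
    (hlen : ∀ n, relLen n (n + 1) ≤ C * J)
    (hmul : ∀ m n p, m ≤ n → n ≤ p → relLen m p = relLen m n * relLen n p)
    (hcomp : ∀ m n p, m ≤ n → n ≤ p → ∀ (a : A p) (q : Fin (relLen n p)) (r : Fin (relLen m n))
      (h : (q : ℕ) * relLen m n + (r : ℕ) < relLen m p),
      blocks m p a ⟨(q : ℕ) * relLen m n + (r : ℕ), h⟩ = blocks m n (blocks n p a q) r)
    (hcoinc : ∀ m, ∀ a b : A (m + k), ∃ i : Fin (relLen m (m + k)),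
      blocks m (m + k) a i = blocks m (m + k) b i) :
    (∀ n : ℕ, 1 ≤ n → ∀ a b : A (n * k),
      (1 - (((C:ℝ)^k * (J:ℝ)^k - 1) / ((C:ℝ)^k * (J:ℝ)^k))^n) * relLen 0 (n * k) ≤
        ((Finset.univ.filter (fun i : Fin (relLen 0 (n * k)) =>
          blocks 0 (n * k) a i = blocks 0 (n * k) b i)).card : ℝ)) ∧
    Tendsto (fun n : ℕ => 1 - (((C:ℝ)^k * (J:ℝ)^k - 1) / ((C:ℝ)^k * (J:ℝ)^k))^n)
      atTop (nhds 1) := by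
  set Dr : ℝ := (C:ℝ)^k * (J:ℝ)^k with hDrdef
  have hC1 : (1:ℝ) ≤ (C:ℝ) := by exact_mod_cast hC
  have hJ1 : (1:ℝ) ≤ (J:ℝ) := by exact_mod_cast hJ
  have hDr1 : (1:ℝ) ≤ Dr := by
    have h1 : (1:ℝ) ≤ (C:ℝ)^k := one_le_pow₀ hC1
    have h2 : (1:ℝ) ≤ (J:ℝ)^k := one_le_pow₀ hJ1
    nlinarith
  have hDr0 : (0:ℝ) < Dr := by linarith
  set ρ : ℝ := (Dr - 1) / Dr with hρdef
  have hρmul : ρ * Dr = Dr - 1 := div_mul_cancel₀ _ (ne_of_gt hDr0)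
  have hρ0 : 0 ≤ ρ := div_nonneg (by linarith) (by linarith)
  have hρ1 : ρ < 1 := (div_lt_one hDr0).2 (by linarith)
  -- length bounds
  have hlenpow : ∀ j m : ℕ, relLen m (m + j) ≤ (C * J) ^ j := by
    intro j
    induction j with
    | zero =>
      intro m
      have hp := hpos m m le_rfl
      have he := hmul m m m le_rfl le_rfl
      simpa using by nlinarith
    | succ j ih =>
      intro m
      have h1 : relLen m (m + (j + 1)) = relLen m (m + j) * relLen (m + j) (m + j + 1) :=
        hmul m (m + j) (m + j + 1) (Nat.le_add_right _ _) (Nat.le_succ _)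
      calc relLen m (m + (j + 1)) = relLen m (m + j) * relLen (m + j) (m + j + 1) := h1
        _ ≤ (C * J) ^ j * (C * J) := Nat.mul_le_mul (ih m) (hlen (m + j))
        _ = (C * J) ^ (j + 1) := (pow_succ _ _).symm
  have hcoinc' : ∀ m p, p = m + k → ∀ a b : A p, ∃ i : Fin (relLen m p),
      blocks m p a i = blocks m p b i := by
    intro m p hp; subst hp; exact hcoinc m
  have hlenk : ∀ m p, p = m + k → relLen m p ≤ (C * J) ^ k := by
    intro m p hp; subst hp; exact hlenpow k m
  have hcastD : (((C * J) ^ k : ℕ) : ℝ) = Dr := by push_cast; ring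
  have main : ∀ n : ℕ, ∀ a b : A (n * k),
      (1 - ρ ^ n) * relLen 0 (n * k) ≤
        ((Finset.univ.filter (fun i : Fin (relLen 0 (n * k)) =>
          blocks 0 (n * k) a i = blocks 0 (n * k) b i)).card : ℝ) := by
    intro n
    induction n with
    | zero => intro a b; simp
    | succ n ih =>
      intro a b
      have hpm : (n + 1) * k = n * k + k := by ring
      have hmp : n * k ≤ (n + 1) * k := hpm ▸ Nat.le_add_right _ _
      have hNL : relLen 0 ((n + 1) * k) =
          relLen 0 (n * k) * relLen (n * k) ((n + 1) * k) :=
        hmul 0 (n * k) ((n + 1) * k) (Nat.zero_le _) hmp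
      have hNpos : 0 < relLen 0 (n * k) := hpos 0 (n * k) (Nat.zero_le _)
      have hLpos : 0 < relLen (n * k) ((n + 1) * k) := hpos _ _ hmp
      obtain ⟨q, hq⟩ := hcoinc' (n * k) ((n + 1) * k) hpm a b
      have hbd : ∀ (q' : Fin (relLen (n * k) ((n + 1) * k))) (r : Fin (relLen 0 (n * k))),
          (q' : ℕ) * relLen 0 (n * k) + (r : ℕ) < relLen 0 ((n + 1) * k) := by
        intro q' r
        rw [hNL]
        calc (q' : ℕ) * relLen 0 (n * k) + (r : ℕ)
            < (q' : ℕ) * relLen 0 (n * k) + relLen 0 (n * k) := Nat.add_lt_add_left r.2 _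
          _ = ((q' : ℕ) + 1) * relLen 0 (n * k) := by ring
          _ ≤ relLen (n * k) ((n + 1) * k) * relLen 0 (n * k) :=
              Nat.mul_le_mul_right _ q'.2
          _ = relLen 0 (n * k) * relLen (n * k) ((n + 1) * k) := Nat.mul_comm _ _
      set emb : (q' : Fin (relLen (n * k) ((n + 1) * k))) →
          (Fin (relLen 0 (n * k)) ↪ Fin (relLen 0 ((n + 1) * k))) := fun q' =>
        ⟨fun r => ⟨(q' : ℕ) * relLen 0 (n * k) + (r : ℕ), hbd q' r⟩, by
          intro r1 r2 h
          have := congrArg Fin.val h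
          simp only at this
          exact Fin.ext (by omega)⟩ with hemb
      set S := Finset.univ.filter (fun i : Fin (relLen 0 ((n + 1) * k)) =>
        blocks 0 ((n + 1) * k) a i = blocks 0 ((n + 1) * k) b i) with hSdef
      set F : Fin (relLen (n * k) ((n + 1) * k)) → Finset (Fin (relLen 0 ((n + 1) * k))) :=
        fun q' => (Finset.univ.filter (fun r : Fin (relLen 0 (n * k)) =>
          blocks 0 (n * k) (blocks (n * k) ((n + 1) * k) a q') r =
          blocks 0 (n * k) (blocks (n * k) ((n + 1) * k) b q') r)).map (emb q')
        with hFdef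
      have hsub : ∀ q', F q' ⊆ S := by
        intro q' x hx
        obtain ⟨r, hr, rfl⟩ := Finset.mem_map.1 hx
        rw [Finset.mem_filter] at hr ⊢
        refine ⟨Finset.mem_univ _, ?_⟩
        show blocks 0 ((n + 1) * k) a ⟨(q' : ℕ) * relLen 0 (n * k) + (r : ℕ), hbd q' r⟩ =
          blocks 0 ((n + 1) * k) b ⟨(q' : ℕ) * relLen 0 (n * k) + (r : ℕ), hbd q' r⟩
        rw [hcomp 0 (n * k) ((n + 1) * k) (Nat.zero_le _) hmp a q' r (hbd q' r),
          hcomp 0 (n * k) ((n + 1) * k) (Nat.zero_le _) hmp b q' r (hbd q' r)]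
        exact hr.2
      have hdisj : ∀ q1 ∈ (Finset.univ : Finset (Fin (relLen (n * k) ((n + 1) * k)))),
          ∀ q2 ∈ Finset.univ, q1 ≠ q2 → Disjoint (F q1) (F q2) := by
        intro q1 _ q2 _ hne
        rw [Finset.disjoint_left]
        intro x h1 h2
        obtain ⟨r1, _, he1⟩ := Finset.mem_map.1 h1
        obtain ⟨r2, _, he2⟩ := Finset.mem_map.1 h2
        have hv : (q1 : ℕ) * relLen 0 (n * k) + (r1 : ℕ) =
            (q2 : ℕ) * relLen 0 (n * k) + (r2 : ℕ) := by
          have := congrArg Fin.val (he1.trans he2.symm)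
          exact this
        apply hne
        apply Fin.ext
        have e1 : ((q1 : ℕ) * relLen 0 (n * k) + (r1 : ℕ)) / relLen 0 (n * k) = (q1 : ℕ) := by
          rw [Nat.mul_comm, Nat.mul_add_div hNpos, Nat.div_eq_of_lt r1.2, Nat.add_zero]
        have e2 : ((q2 : ℕ) * relLen 0 (n * k) + (r2 : ℕ)) / relLen 0 (n * k) = (q2 : ℕ) := by
          rw [Nat.mul_comm, Nat.mul_add_div hNpos, Nat.div_eq_of_lt r2.2, Nat.add_zero]
        rw [← e1, ← e2, hv]
      have hcard : ∑ q' : Fin (relLen (n * k) ((n + 1) * k)), (F q').card ≤ S.card := by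
        rw [← Finset.card_biUnion hdisj]
        exact Finset.card_le_card (Finset.biUnion_subset.2 (fun q' _ => hsub q'))
      have hFq : (F q).card = relLen 0 (n * k) := by
        rw [hFdef]
        simp [hq]
      have hFq' : ∀ q', (1 - ρ ^ n) * (relLen 0 (n * k) : ℝ) ≤ ((F q').card : ℝ) := by
        intro q'
        rw [hFdef]
        simp only [Finset.card_map]
        exact ih (blocks (n * k) ((n + 1) * k) a q') (blocks (n * k) ((n + 1) * k) b q')
      have hσ0 : (0:ℝ) ≤ ρ ^ n := pow_nonneg hρ0 n
      have hsum : (relLen 0 (n * k) : ℝ) + ((relLen (n * k) ((n + 1) * k) : ℝ) - 1) *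
          ((1 - ρ ^ n) * relLen 0 (n * k)) ≤
          ∑ q' : Fin (relLen (n * k) ((n + 1) * k)), ((F q').card : ℝ) := by
        rw [← Finset.add_sum_erase _ _ (Finset.mem_univ q)]
        have h1 : ((Finset.univ.erase q).card : ℝ) =
            (relLen (n * k) ((n + 1) * k) : ℝ) - 1 := by
          rw [Finset.card_erase_of_mem (Finset.mem_univ q), Finset.card_univ,
            Fintype.card_fin, Nat.cast_sub hLpos]
          simp
        have h2 := Finset.card_nsmul_le_sum (Finset.univ.erase q)
          (fun x => ((F x).card : ℝ)) ((1 - ρ ^ n) * (relLen 0 (n * k) : ℝ))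
          (fun x _ => hFq' x)
        rw [nsmul_eq_mul, h1] at h2
        have h3 : ((relLen 0 (n * k) : ℕ) : ℝ) ≤ ((F q).card : ℝ) := by rw [hFq]
        linarith
      have hScard : (relLen 0 (n * k) : ℝ) + ((relLen (n * k) ((n + 1) * k) : ℝ) - 1) *
          ((1 - ρ ^ n) * relLen 0 (n * k)) ≤ (S.card : ℝ) := by
        refine le_trans hsum ?_
        have h4 : ((∑ q' : Fin (relLen (n * k) ((n + 1) * k)), (F q').card : ℕ) : ℝ) ≤
            (S.card : ℝ) := by exact_mod_cast hcard
        rw [Nat.cast_sum] at h4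
        exact h4
      have hLD : ((relLen (n * k) ((n + 1) * k) : ℕ) : ℝ) ≤ Dr := by
        rw [← hcastD]
        exact_mod_cast hlenk (n * k) ((n + 1) * k) hpm
      have hL1 : (1:ℝ) ≤ ((relLen (n * k) ((n + 1) * k) : ℕ) : ℝ) := by exact_mod_cast hLpos
      have key : ((relLen (n * k) ((n + 1) * k) : ℕ) : ℝ) - 1 ≤
          ((relLen (n * k) ((n + 1) * k) : ℕ) : ℝ) * ρ := by
        nlinarith [mul_le_mul_of_nonneg_right hLD (by linarith : (0:ℝ) ≤ 1 - ρ)]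
      have hNr : (0:ℝ) ≤ ((relLen 0 (n * k) : ℕ) : ℝ) := Nat.cast_nonneg _
      have hNL' : ((relLen 0 ((n + 1) * k) : ℕ) : ℝ) =
          ((relLen 0 (n * k) : ℕ) : ℝ) * ((relLen (n * k) ((n + 1) * k) : ℕ) : ℝ) := by
        rw [hNL]; push_cast; ring
      rw [hNL', pow_succ]
      nlinarith [mul_nonneg (mul_nonneg hNr hσ0) (sub_nonneg.2 key)]
  constructor
  · intro n _ a b; exact main n a b
  · have h0 : Tendsto (fun n : ℕ => ρ ^ n) atTop (nhds 0) :=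
      tendsto_pow_atTop_nhds_zero_of_lt_one hρ0 hρ1
    have h1 := h0.const_sub (1 : ℝ)
    simpa using h1
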